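/- Let Σ ⊂ ℝ^n be a tropical fan of pure dimension d and Σ' ⊂ ℝ^{n'} a tropical fan of pure dimension d', and assume both Σ and Σ' are locally irreducible. Then the product Σ×Σ' is a tropical fan of pure dimension d+d' in ℝ^{n+n'} and is locally irreducible, i.e., Σ×Σ' is irreducible at every cone σ×σ' with σ ∈ Σ and σ' ∈ Σ'. -/

import Mathlib

/- Formalization of polyhedral-geometry notions: rational fans in ℝⁿ with lattice ℤⁿ,
tropical fans (balancing condition), conewise integral linear functions, Minkowski
weights, etc., following the paper "Homology of tropical fans" by Amini–Piquerez. -/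

open Classical MvPolynomial
open scoped TensorProduct DirectSum

noncomputable section

/-- The ambient space `ℝ^n`. -/
abbrev V (n : ℕ) : Type := Fin n → ℝ

/-- The inclusion of the lattice `ℤ^n` into `ℝ^n`. -/
def intVec {n : ℕ} (v : Fin n → ℤ) : V n := fun i => (v i : ℝ)

lemma intVec_zero {n : ℕ} : intVec (0 : Fin n → ℤ) = 0 := by
  funext i; simp [intVec]

lemma intVec_add {n : ℕ} (a b : Fin n → ℤ) : intVec (a + b) = intVec a + intVec b := by
  funext i; simp [intVec]

lemma intVec_neg {n : ℕ} (a : Fin n → ℤ) : intVec (-a) = -intVec a := by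
  funext i; simp [intVec]

/-- The pairing between `M = Hom(ℤ^n, ℤ)` (an element of which is represented by its
coefficient vector) and the lattice `ℤ^n`. -/
def pairZ {n : ℕ} (ℓ v : Fin n → ℤ) : ℤ := ∑ i, ℓ i * v i

/-- The pairing between an element of `M` and a vector of `ℝ^n`, i.e. the linear form
on `ℝ^n` defined by an element of `M`. -/
def pairR {n : ℕ} (ℓ : Fin n → ℤ) (x : V n) : ℝ := ∑ i, (ℓ i : ℝ) * x i

/-- `σ` is a rational cone: the set of nonnegative combinations of a finite set of
integer vectors. -/
def IsRationalCone {n : ℕ} (σ : Set (V n)) : Prop :=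
  ∃ S : Finset (Fin n → ℤ),
    σ = {x | ∃ lam : (Fin n → ℤ) → ℝ, (∀ v, 0 ≤ lam v) ∧ x = ∑ v ∈ S, lam v • intVec v}

/-- A cone is strongly convex if `σ ∩ (-σ) = {0}`. -/
def StronglyConvex {n : ℕ} (σ : Set (V n)) : Prop := σ ∩ (-σ) = {0}

/-- `τ` is a face of the cone `σ`: `τ = σ ∩ ker ℓ` for a linear form `ℓ` nonnegative
on `σ`. -/
def IsFaceOf {n : ℕ} (τ σ : Set (V n)) : Prop :=
  ∃ ℓ : (V n) →ₗ[ℝ] ℝ, (∀ x ∈ σ, 0 ≤ ℓ x) ∧ τ = σ ∩ {x | ℓ x = 0}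

/-- A (rational) fan in `ℝ^n`: a finite nonempty collection of strongly convex rational
cones, closed under taking faces, such that the intersection of any two cones is a face
of each of them. -/
structure IsFan {n : ℕ} (F : Finset (Set (V n))) : Prop where
  nonempty : F.Nonempty
  rat : ∀ σ ∈ F, IsRationalCone σ
  convex : ∀ σ ∈ F, StronglyConvex σ
  faces_mem : ∀ σ ∈ F, ∀ τ : Set (V n), IsFaceOf τ σ → τ ∈ F
  inter_face_left : ∀ σ ∈ F, ∀ σ' ∈ F, IsFaceOf (σ ∩ σ') σ
  inter_face_right : ∀ σ ∈ F, ∀ σ' ∈ F, IsFaceOf (σ ∩ σ') σ'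

/-- The dimension of a cone: the dimension of its real linear span. -/
def dimC {n : ℕ} (σ : Set (V n)) : ℕ := Module.finrank ℝ ↥(Submodule.span ℝ σ)

/-- `v ∈ N_σ := ℤ^n ∩ span_ℝ(σ)`. -/
def memLat {n : ℕ} (σ : Set (V n)) (v : Fin n → ℤ) : Prop :=
  intVec v ∈ Submodule.span ℝ σ

/-- `v` is a normal vector `n_{σ/τ}` for the codimension-one face `τ` of `σ`:
`v ∈ N_σ ∩ (σ + span_ℝ(τ))` and `N_τ + ℤ·v = N_σ`. -/
def IsNormalVector {n : ℕ} (σ τ : Set (V n)) (v : Fin n → ℤ) : Prop :=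
  memLat σ v ∧ (∃ y ∈ σ, ∃ z ∈ Submodule.span ℝ τ, intVec v = y + z) ∧
  ∀ w : Fin n → ℤ, memLat σ w ↔ ∃ u : Fin n → ℤ, ∃ k : ℤ, memLat τ u ∧ w = u + k • v

/-- The cones of `F` of dimension `d` containing `τ`. -/
def facets {n : ℕ} (F : Finset (Set (V n))) (d : ℕ) (τ : Set (V n)) :
    Finset (Set (V n)) :=
  F.filter fun σ => dimC σ = d ∧ τ ⊆ σ

/-- `Σ_k`: the `k`-dimensional cones of the fan. -/
def conesK {n : ℕ} (F : Finset (Set (V n))) (k : ℕ) : Finset (Set (V n)) :=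
  F.filter fun σ => dimC σ = k

/-- A tropical fan of pure dimension `d`: a rational fan, pure of dimension `d`
(every maximal cone has dimension `d`), satisfying the balancing condition: for every
`τ ∈ Σ_{d-1}` and any choice of normal vectors, `∑_{σ ⊃ τ} n_{σ/τ} ∈ N_τ`. -/
def IsTropicalFan {n : ℕ} (F : Finset (Set (V n))) (d : ℕ) : Prop :=
  IsFan F ∧ (∀ σ ∈ F, (∀ η ∈ F, σ ⊆ η → σ = η) → dimC σ = d) ∧
  ∀ τ ∈ F, dimC τ = d - 1 →
    ∀ v : Set (V n) → Fin n → ℤ,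
      (∀ σ ∈ facets F d τ, IsNormalVector σ τ (v σ)) →
      memLat τ (∑ σ ∈ facets F d τ, v σ)

/-- `f` is conewise integral linear on the fan `F`: on each cone it agrees with an
element of `M`. -/
def ConewiseLinear {n : ℕ} (F : Finset (Set (V n))) (f : V n → ℝ) : Prop :=
  ∀ σ ∈ F, ∃ ℓ : Fin n → ℤ, ∀ x ∈ σ, f x = pairR ℓ x

/-- A Minkowski weight of dimension `k` on the fan `F`: an integer weight on `Σ_k`
satisfying the balancing condition. -/
def IsMinkowskiWeight {n : ℕ} (F : Finset (Set (V n))) (k : ℕ) (w : Set (V n) → ℤ) :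
    Prop :=
  ∀ τ ∈ F, dimC τ = k - 1 →
    ∀ u : Set (V n) → Fin n → ℤ,
      (∀ σ ∈ facets F k τ, IsNormalVector σ τ (u σ)) →
      memLat τ (∑ σ ∈ facets F k τ, w σ • u σ)

/-- The product `σ × σ'` of a cone in `ℝ^n` and a cone in `ℝ^{n'}`, inside
`ℝ^{n+n'}`. -/
def prodCone {n n' : ℕ} (σ : Set (V n)) (σ' : Set (V n')) : Set (V (n + n')) :=
  {x | (fun i : Fin n => x (Fin.castAdd n' i)) ∈ σ ∧
       (fun j : Fin n' => x (Fin.natAdd n j)) ∈ σ'}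

/-- The product fan `Σ × Σ'` in `ℝ^{n+n'}`: the collection of cones `σ × σ'`. -/
def prodFan {n n' : ℕ} (F : Finset (Set (V n))) (F' : Finset (Set (V n'))) :
    Finset (Set (V (n + n'))) :=
  (F ×ˢ F').image fun p => prodCone p.1 p.2

/-- The tropical fan `F` of dimension `d` is irreducible at the cone `η`: every integer
weight on the facets of the star of `η` satisfying the balancing condition at every
codimension-one cone of the star of `η` is constant. -/
def IrreducibleAt {n : ℕ} (F : Finset (Set (V n))) (d : ℕ) (η : Set (V n)) : Prop :=
  ∀ w : Set (V n) → ℤ,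
    (∀ τ ∈ F, dimC τ = d - 1 → η ⊆ τ →
      ∀ u : Set (V n) → Fin n → ℤ,
        (∀ σ ∈ facets F d τ, IsNormalVector σ τ (u σ)) →
        memLat τ (∑ σ ∈ facets F d τ, w σ • u σ)) →
    ∀ σ ∈ facets F d η, ∀ σ' ∈ facets F d η, w σ = w σ'

-- projections and glue
def pr1 {n n' : ℕ} : V (n+n') →ₗ[ℝ] V n := LinearMap.funLeft ℝ ℝ (Fin.castAdd n')
def pr2 {n n' : ℕ} : V (n+n') →ₗ[ℝ] V n' := LinearMap.funLeft ℝ ℝ (Fin.natAdd n)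
def glue {n n' : ℕ} (x : V n) (y : V n') : V (n+n') := Fin.addCases x y

lemma pr1_glue {n n'} (x : V n) (y : V n') : pr1 (glue x y) = x := by
  funext i; simp [pr1, glue, LinearMap.funLeft]
lemma pr2_glue {n n'} (x : V n) (y : V n') : pr2 (glue x y) = y := by
  funext i; simp [pr2, glue, LinearMap.funLeft]
lemma glue_pr {n n'} (z : V (n+n')) : glue (pr1 z) (pr2 z) = z := by
  funext i
  induction i using Fin.addCases with
  | left i => simp [glue, pr1, LinearMap.funLeft]
  | right i => simp [glue, pr2, LinearMap.funLeft]
lemma glue_add {n n'} (x x' : V n) (y y' : V n') :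
    glue x y + glue x' y' = glue (x + x') (y + y') := by
  funext i
  induction i using Fin.addCases with
  | left i => simp [glue]
  | right i => simp [glue]
lemma glue_smul {n n'} (c : ℝ) (x : V n) (y : V n') :
    c • glue x y = glue (c • x) (c • y) := by
  funext i
  induction i using Fin.addCases with
  | left i => simp [glue]
  | right i => simp [glue]
lemma glue_zero {n n'} : glue (0 : V n) (0 : V n') = 0 := by
  funext i; induction i using Fin.addCases with
  | left i => simp [glue]
  | right i => simp [glue]

def emb1 {n n' : ℕ} : V n →ₗ[ℝ] V (n+n') where
  toFun x := glue x 0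
  map_add' x x' := by rw [glue_add]; simp
  map_smul' c x := by rw [glue_smul]; simp
def emb2 {n n' : ℕ} : V n' →ₗ[ℝ] V (n+n') where
  toFun y := glue 0 y
  map_add' x x' := by rw [glue_add]; simp
  map_smul' c x := by rw [glue_smul]; simp

lemma emb_add {n n'} (x : V n) (y : V n') : emb1 x + emb2 y = glue x y := by
  show glue x 0 + glue 0 y = glue x y
  rw [glue_add]; simp

-- integer versions
def pz1 {n n' : ℕ} (v : Fin (n+n') → ℤ) : Fin n → ℤ := fun i => v (Fin.castAdd n' i)
def pz2 {n n' : ℕ} (v : Fin (n+n') → ℤ) : Fin n' → ℤ := fun j => v (Fin.natAdd n j)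
def gz {n n' : ℕ} (a : Fin n → ℤ) (b : Fin n' → ℤ) : Fin (n+n') → ℤ := Fin.addCases a b

lemma intVec_pz1 {n n'} (v : Fin (n+n') → ℤ) : intVec (pz1 v) = pr1 (intVec v) := rfl
lemma intVec_pz2 {n n'} (v : Fin (n+n') → ℤ) : intVec (pz2 v) = pr2 (intVec v) := rfl
lemma intVec_gz {n n'} (a : Fin n → ℤ) (b : Fin n' → ℤ) :
    intVec (gz a b) = glue (intVec a) (intVec b) := by
  funext i
  induction i using Fin.addCases with
  | left i => simp [intVec, gz, glue]
  | right i => simp [intVec, gz, glue]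
lemma pz1_gz {n n'} (a : Fin n → ℤ) (b : Fin n' → ℤ) : pz1 (gz a b) = a := by
  funext i; simp [pz1, gz]
lemma pz2_gz {n n'} (a : Fin n → ℤ) (b : Fin n' → ℤ) : pz2 (gz a b) = b := by
  funext i; simp [pz2, gz]
lemma gz_pz {n n'} (v : Fin (n+n') → ℤ) : gz (pz1 v) (pz2 v) = v := by
  funext i
  induction i using Fin.addCases with
  | left i => simp [pz1, gz]
  | right i => simp [pz2, gz]
lemma pz1_add {n n'} (v w : Fin (n+n') → ℤ) : pz1 (v + w) = pz1 v + pz1 w := rfl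
lemma pz2_add {n n'} (v w : Fin (n+n') → ℤ) : pz2 (v + w) = pz2 v + pz2 w := rfl
lemma pz1_smul {n n'} (k : ℤ) (v : Fin (n+n') → ℤ) : pz1 (k • v) = k • pz1 v := rfl
lemma pz2_smul {n n'} (k : ℤ) (v : Fin (n+n') → ℤ) : pz2 (k • v) = k • pz2 v := rfl
lemma gz_add {n n'} (a a' : Fin n → ℤ) (b b' : Fin n' → ℤ) :
    gz a b + gz a' b' = gz (a + a') (b + b') := by
  funext i
  induction i using Fin.addCases with
  | left i => simp [gz]
  | right i => simp [gz]
lemma gz_smul {n n'} (k : ℤ) (a : Fin n → ℤ) (b : Fin n' → ℤ) :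
    k • gz a b = gz (k • a) (k • b) := by
  funext i
  induction i using Fin.addCases with
  | left i => simp [gz]
  | right i => simp [gz]
lemma intVec_sum {n : ℕ} {α : Type*} (s : Finset α) (f : α → Fin n → ℤ) :
    intVec (∑ a ∈ s, f a) = ∑ a ∈ s, intVec (f a) := by
  funext i
  simp [intVec, Finset.sum_apply]
lemma intVec_zsmul {n : ℕ} (k : ℤ) (v : Fin n → ℤ) :
    intVec (k • v) = (k : ℝ) • intVec v := by
  funext i; simp [intVec]
lemma intVec_add' {n : ℕ} (a b : Fin n → ℤ) : intVec (a + b) = intVec a + intVec b := by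
  funext i; simp [intVec]
lemma intVec_zero' {n : ℕ} : intVec (0 : Fin n → ℤ) = 0 := by
  funext i; simp [intVec]

lemma mem_prodCone {n n'} {σ : Set (V n)} {σ' : Set (V n')} {x : V (n+n')} :
    x ∈ prodCone σ σ' ↔ pr1 x ∈ σ ∧ pr2 x ∈ σ' := Iff.rfl

lemma glue_mem_prodCone {n n'} {σ : Set (V n)} {σ' : Set (V n')} {x : V n} {y : V n'} :
    glue x y ∈ prodCone σ σ' ↔ x ∈ σ ∧ y ∈ σ' := by
  rw [mem_prodCone, pr1_glue, pr2_glue]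

lemma mem_span_prodCone {n n'} {σ : Set (V n)} {σ' : Set (V n')}
    (h0 : (0:V n) ∈ σ) (h0' : (0:V n') ∈ σ') {z : V (n+n')} :
    z ∈ Submodule.span ℝ (prodCone σ σ') ↔
      pr1 z ∈ Submodule.span ℝ σ ∧ pr2 z ∈ Submodule.span ℝ σ' := by
  constructor
  · intro hz
    have h1 : Submodule.span ℝ (prodCone σ σ') ≤
        (Submodule.span ℝ σ).comap pr1 ⊓ (Submodule.span ℝ σ').comap pr2 := by
      rw [Submodule.span_le]
      intro x hx
      exact ⟨Submodule.subset_span hx.1, Submodule.subset_span hx.2⟩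
    exact h1 hz
  · rintro ⟨h1, h2⟩
    have e1 : emb1 (pr1 z) ∈ Submodule.span ℝ (prodCone σ σ') := by
      have : Submodule.map (emb1 (n := n) (n' := n')) (Submodule.span ℝ σ) ≤
          Submodule.span ℝ (prodCone σ σ') := by
        rw [Submodule.map_span, Submodule.span_le]
        intro x hx
        obtain ⟨a, ha, rfl⟩ := hx
        exact Submodule.subset_span (glue_mem_prodCone.mpr ⟨ha, h0'⟩)
      exact this ⟨pr1 z, h1, rfl⟩
    have e2 : emb2 (pr2 z) ∈ Submodule.span ℝ (prodCone σ σ') := by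
      have : Submodule.map (emb2 (n := n) (n' := n')) (Submodule.span ℝ σ') ≤
          Submodule.span ℝ (prodCone σ σ') := by
        rw [Submodule.map_span, Submodule.span_le]
        intro x hx
        obtain ⟨a, ha, rfl⟩ := hx
        exact Submodule.subset_span (glue_mem_prodCone.mpr ⟨h0, ha⟩)
      exact this ⟨pr2 z, h2, rfl⟩
    have := Submodule.add_mem _ e1 e2
    rwa [show emb1 (pr1 z) + emb2 (pr2 z) = z from by rw [emb_add, glue_pr]] at this

def glueL {n n' : ℕ} : (V n × V n') →ₗ[ℝ] V (n+n') where
  toFun p := glue p.1 p.2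
  map_add' p q := by simp [glue_add]
  map_smul' c p := by simp [glue_smul]

def splitEquiv {n n' : ℕ} : V (n+n') ≃ₗ[ℝ] V n × V n' :=
  LinearEquiv.ofLinear (LinearMap.prod pr1 pr2) glueL
    (by ext p <;> simp [glueL, LinearMap.prod_apply, pr1_glue, pr2_glue])
    (by refine LinearMap.ext fun z => ?_; exact glue_pr z)

def subProdEquiv {R M M' : Type*} [CommRing R] [AddCommGroup M] [AddCommGroup M']
    [Module R M] [Module R M'] (p : Submodule R M) (q : Submodule R M') :
    ↥(p.prod q) ≃ₗ[R] ↥p × ↥q where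
  toFun z := (⟨z.val.1, z.prop.1⟩, ⟨z.val.2, z.prop.2⟩)
  invFun w := ⟨(w.1.val, w.2.val), ⟨w.1.prop, w.2.prop⟩⟩
  map_add' _ _ := rfl
  map_smul' _ _ := rfl
  left_inv _ := rfl
  right_inv _ := rfl

lemma finrank_subProd {R M M' : Type*} [Field R] [AddCommGroup M] [AddCommGroup M']
    [Module R M] [Module R M'] (p : Submodule R M) (q : Submodule R M')
    [FiniteDimensional R M] [FiniteDimensional R M'] :
    Module.finrank R ↥(p.prod q) = Module.finrank R p + Module.finrank R q := by
  rw [(subProdEquiv p q).finrank_eq, Module.finrank_prod]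

lemma dimC_prodCone {n n'} {σ : Set (V n)} {σ' : Set (V n')}
    (h0 : (0:V n) ∈ σ) (h0' : (0:V n') ∈ σ') :
    dimC (prodCone σ σ') = dimC σ + dimC σ' := by
  have hspan : Submodule.span ℝ (prodCone σ σ') =
      ((Submodule.span ℝ σ).prod (Submodule.span ℝ σ')).comap
        (splitEquiv (n := n) (n' := n') : V (n+n') →ₗ[ℝ] V n × V n') := by
    ext z
    rw [mem_span_prodCone h0 h0']
    rfl
  rw [dimC, hspan]
  rw [Submodule.comap_equiv_eq_map_symm]
  rw [LinearEquiv.finrank_map_eq]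
  rw [finrank_subProd]
  rfl

-- fan generalities
lemma zero_mem_of_sc {n : ℕ} {σ : Set (V n)} (h : StronglyConvex σ) : (0:V n) ∈ σ := by
  have : (0:V n) ∈ σ ∩ (-σ) := h ▸ rfl
  exact this.1

lemma eq_zero_cone {n : ℕ} {σ : Set (V n)} (h0 : (0:V n) ∈ σ) (hd : dimC σ = 0) :
    σ = {0} := by
  have hb : Submodule.span ℝ σ = ⊥ := Submodule.finrank_eq_zero.mp hd
  apply Set.eq_singleton_iff_unique_mem.mpr
  refine ⟨h0, fun x hx => ?_⟩
  have : x ∈ Submodule.span ℝ σ := Submodule.subset_span hx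
  rw [hb] at this
  simpa using this

lemma dimC_mono {n : ℕ} {σ τ : Set (V n)} (h : σ ⊆ τ) : dimC σ ≤ dimC τ :=
  Submodule.finrank_mono (Submodule.span_mono h)

lemma exists_maximal_above {n : ℕ} {F : Finset (Set (V n))} {σ : Set (V n)}
    (hσ : σ ∈ F) : ∃ η ∈ F, σ ⊆ η ∧ ∀ ρ ∈ F, η ⊆ ρ → η = ρ := by
  classical
  have hne : (F.filter fun ρ => σ ⊆ ρ).Nonempty := ⟨σ, Finset.mem_filter.mpr ⟨hσ, le_refl σ⟩⟩
  obtain ⟨η, hηm⟩ := Finset.exists_maximal hne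
  have hη := hηm.prop
  have hmax : ∀ x ∈ F.filter (fun ρ => σ ⊆ ρ), ¬ η < x :=
    fun x hx hlt => absurd (hηm.2 hx hlt.le) (not_le_of_gt hlt)
  rw [Finset.mem_filter] at hη
  refine ⟨η, hη.1, hη.2, fun ρ hρ hsub => ?_⟩
  by_contra hne'
  exact hmax ρ (Finset.mem_filter.mpr ⟨hρ, hη.2.trans hsub⟩) (lt_of_le_of_ne hsub hne')

lemma dimC_le_of_tropical {n d : ℕ} {F : Finset (Set (V n))} (hF : IsTropicalFan F d)
    {σ : Set (V n)} (hσ : σ ∈ F) : dimC σ ≤ d := by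
  obtain ⟨η, hη, hsub, hmax⟩ := exists_maximal_above hσ
  have := hF.2.1 η hη hmax
  exact this ▸ dimC_mono hsub

lemma face_eq_of_dim {n : ℕ} {τ σ : Set (V n)} (hface : IsFaceOf τ σ)
    (hd : dimC σ ≤ dimC τ) : τ = σ := by
  obtain ⟨ℓ, hpos, rfl⟩ := hface
  have hsub : σ ∩ {x | ℓ x = 0} ⊆ σ := Set.inter_subset_left
  have hle : Submodule.span ℝ (σ ∩ {x | ℓ x = 0}) ≤ Submodule.span ℝ σ :=
    Submodule.span_mono hsub
  have heq : Submodule.span ℝ (σ ∩ {x | ℓ x = 0}) = Submodule.span ℝ σ :=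
    Submodule.eq_of_le_of_finrank_le hle hd
  have hker : Submodule.span ℝ (σ ∩ {x | ℓ x = 0}) ≤ LinearMap.ker ℓ := by
    rw [Submodule.span_le]; intro x hx; exact hx.2
  rw [heq] at hker
  apply Set.Subset.antisymm hsub
  intro x hx
  exact ⟨hx, hker (Submodule.subset_span hx)⟩

-- prodCone order lemmas
lemma prodCone_mono {n n'} {σ ρ : Set (V n)} {σ' ρ' : Set (V n')}
    (h : σ ⊆ ρ) (h' : σ' ⊆ ρ') : prodCone σ σ' ⊆ prodCone ρ ρ' :=
  fun _ hx => ⟨h hx.1, h' hx.2⟩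

lemma prodCone_subset_iff {n n'} {σ ρ : Set (V n)} {σ' ρ' : Set (V n')}
    (h0 : (0:V n) ∈ σ) (h0' : (0:V n') ∈ σ') :
    prodCone σ σ' ⊆ prodCone ρ ρ' ↔ σ ⊆ ρ ∧ σ' ⊆ ρ' := by
  constructor
  · intro h
    constructor
    · intro x hx
      have := h (glue_mem_prodCone.mpr ⟨hx, h0'⟩)
      rw [mem_prodCone, pr1_glue] at this
      exact this.1
    · intro y hy
      have := h (glue_mem_prodCone.mpr ⟨h0, hy⟩)
      rw [mem_prodCone, pr2_glue] at this
      exact this.2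
  · rintro ⟨h, h'⟩; exact prodCone_mono h h'

lemma prodCone_inj {n n'} {σ ρ : Set (V n)} {σ' ρ' : Set (V n')}
    (h0 : (0:V n) ∈ σ) (h0' : (0:V n') ∈ σ') (g0 : (0:V n) ∈ ρ) (g0' : (0:V n') ∈ ρ')
    (h : prodCone σ σ' = prodCone ρ ρ') : σ = ρ ∧ σ' = ρ' := by
  have h1 := (prodCone_subset_iff h0 h0').mp h.subset
  have h2 := (prodCone_subset_iff g0 g0').mp h.superset
  exact ⟨Set.Subset.antisymm h1.1 h2.1, Set.Subset.antisymm h1.2 h2.2⟩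

lemma mem_prodFan {n n'} {F : Finset (Set (V n))} {F' : Finset (Set (V n'))}
    {X : Set (V (n+n'))} :
    X ∈ prodFan F F' ↔ ∃ σ ∈ F, ∃ σ' ∈ F', X = prodCone σ σ' := by
  unfold prodFan
  simp only [Finset.mem_image, Finset.mem_product, Prod.exists]
  constructor
  · rintro ⟨a, b, ⟨ha, hb⟩, rfl⟩; exact ⟨a, ha, b, hb, rfl⟩
  · rintro ⟨a, ha, b, hb, rfl⟩; exact ⟨a, b, ⟨ha, hb⟩, rfl⟩

lemma zero_mem_of_fan {n : ℕ} {F : Finset (Set (V n))} (hF : IsFan F)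
    {σ : Set (V n)} (hσ : σ ∈ F) : (0:V n) ∈ σ :=
  zero_mem_of_sc (hF.convex σ hσ)

lemma prodCone_inter {n n'} (σ ρ : Set (V n)) (σ' ρ' : Set (V n')) :
    prodCone σ σ' ∩ prodCone ρ ρ' = prodCone (σ ∩ ρ) (σ' ∩ ρ') := by
  ext x
  simp only [Set.mem_inter_iff, mem_prodCone]
  tauto

-- strong convexity of products
lemma sc_prodCone {n n'} {σ : Set (V n)} {σ' : Set (V n')}
    (h : StronglyConvex σ) (h' : StronglyConvex σ') :
    StronglyConvex (prodCone σ σ') := by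
  have h0 := zero_mem_of_sc h
  have h0' := zero_mem_of_sc h'
  apply Set.eq_singleton_iff_unique_mem.mpr
  constructor
  · constructor
    · rw [← glue_zero]; exact glue_mem_prodCone.mpr ⟨h0, h0'⟩
    · rw [Set.mem_neg, neg_zero, ← glue_zero]; exact glue_mem_prodCone.mpr ⟨h0, h0'⟩
  · rintro x ⟨hx, hnx⟩
    rw [Set.mem_neg] at hnx
    have hx1 : pr1 x ∈ σ ∩ (-σ) := by
      refine ⟨hx.1, ?_⟩
      rw [Set.mem_neg]
      have : pr1 (-x) ∈ σ := hnx.1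
      rwa [map_neg] at this
    have hx2 : pr2 x ∈ σ' ∩ (-σ') := by
      refine ⟨hx.2, ?_⟩
      rw [Set.mem_neg]
      have : pr2 (-x) ∈ σ' := hnx.2
      rwa [map_neg] at this
    rw [h] at hx1
    rw [h'] at hx2
    rw [← glue_pr x, hx1, hx2, glue_zero]

-- face lemmas
lemma isFaceOf_prodCone {n n'} {τ σ : Set (V n)} {τ' σ' : Set (V n')}
    (h : IsFaceOf τ σ) (h' : IsFaceOf τ' σ') :
    IsFaceOf (prodCone τ τ') (prodCone σ σ') := by
  obtain ⟨ℓ₁, hpos₁, rfl⟩ := h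
  obtain ⟨ℓ₂, hpos₂, rfl⟩ := h'
  refine ⟨ℓ₁.comp pr1 + ℓ₂.comp pr2, fun x hx => ?_, ?_⟩
  · exact add_nonneg (hpos₁ _ hx.1) (hpos₂ _ hx.2)
  · ext x
    simp only [mem_prodCone, Set.mem_inter_iff, Set.mem_setOf_eq, LinearMap.add_apply,
      LinearMap.comp_apply]
    constructor
    · rintro ⟨⟨h1, e1⟩, ⟨h2, e2⟩⟩
      exact ⟨⟨h1, h2⟩, by rw [e1, e2, add_zero]⟩
    · rintro ⟨⟨h1, h2⟩, e⟩
      have p1 := hpos₁ _ h1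
      have p2 := hpos₂ _ h2
      have e1 : ℓ₁ (pr1 x) = 0 := by linarith
      have e2 : ℓ₂ (pr2 x) = 0 := by linarith
      exact ⟨⟨h1, e1⟩, ⟨h2, e2⟩⟩

lemma face_of_prodCone {n n'} {σ : Set (V n)} {σ' : Set (V n')} {τ : Set (V (n+n'))}
    (h0 : (0:V n) ∈ σ) (h0' : (0:V n') ∈ σ')
    (h : IsFaceOf τ (prodCone σ σ')) :
    ∃ τ₁ τ₂, IsFaceOf τ₁ σ ∧ IsFaceOf τ₂ σ' ∧ τ = prodCone τ₁ τ₂ := by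
  obtain ⟨ℓ, hpos, rfl⟩ := h
  refine ⟨σ ∩ {x | ℓ (emb1 x) = 0}, σ' ∩ {y | ℓ (emb2 y) = 0},
    ⟨ℓ.comp emb1, fun x hx => hpos _ (glue_mem_prodCone.mpr ⟨hx, h0'⟩), rfl⟩,
    ⟨ℓ.comp emb2, fun y hy => hpos _ (glue_mem_prodCone.mpr ⟨h0, hy⟩), rfl⟩, ?_⟩
  ext x
  simp only [Set.mem_inter_iff, mem_prodCone, Set.mem_setOf_eq]
  have hdec : ℓ x = ℓ (emb1 (pr1 x)) + ℓ (emb2 (pr2 x)) := by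
    rw [← map_add, emb_add, glue_pr]
  constructor
  · rintro ⟨⟨h1, h2⟩, he⟩
    have p1 : 0 ≤ ℓ (emb1 (pr1 x)) := hpos _ (glue_mem_prodCone.mpr ⟨h1, h0'⟩)
    have p2 : 0 ≤ ℓ (emb2 (pr2 x)) := hpos _ (glue_mem_prodCone.mpr ⟨h0, h2⟩)
    rw [hdec] at he
    exact ⟨⟨h1, by linarith⟩, ⟨h2, by linarith⟩⟩
  · rintro ⟨⟨h1, e1⟩, ⟨h2, e2⟩⟩
    exact ⟨⟨h1, h2⟩, by rw [hdec, e1, e2, add_zero]⟩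

-- rationality of products
lemma rat_prodCone {n n'} {σ : Set (V n)} {σ' : Set (V n')}
    (h : IsRationalCone σ) (h' : IsRationalCone σ') :
    IsRationalCone (prodCone σ σ') := by
  classical
  obtain ⟨S₁, hS₁⟩ := h
  obtain ⟨S₂, hS₂⟩ := h'
  set e₁ : (Fin n → ℤ) → (Fin (n+n') → ℤ) := fun a => gz a 0 with he₁
  set e₂ : (Fin n' → ℤ) → (Fin (n+n') → ℤ) := fun b => gz 0 b with he₂
  have inj₁ : Function.Injective e₁ := by
    intro a a' h; have := congrArg pz1 h; rwa [he₁, pz1_gz, pz1_gz] at this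
  have inj₂ : Function.Injective e₂ := by
    intro b b' h; have := congrArg pz2 h; rwa [he₂, pz2_gz, pz2_gz] at this
  set A := S₁.image e₁ with hA
  set B := S₂.image e₂ with hB
  refine ⟨A ∪ B, ?_⟩
  ext x
  simp only [Set.mem_setOf_eq]
  constructor
  · intro hx
    rw [mem_prodCone, hS₁, hS₂] at hx
    obtain ⟨⟨lam₁, hlam₁, hx1⟩, ⟨lam₂, hlam₂, hx2⟩⟩ := hx
    set lam : (Fin (n+n') → ℤ) → ℝ := fun v =>
      (if pz2 v = 0 then lam₁ (pz1 v) else 0) + (if pz1 v = 0 then lam₂ (pz2 v) else 0)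
      with hlam
    refine ⟨lam, fun v => add_nonneg (by split <;> [exact hlam₁ _; rfl])
      (by split <;> [exact hlam₂ _; rfl]), ?_⟩
    set g : (Fin (n+n') → ℤ) → V (n+n') := fun v =>
      (if pz2 v = 0 then lam₁ (pz1 v) else 0) • intVec v with hg
    set h : (Fin (n+n') → ℤ) → V (n+n') := fun v =>
      (if pz1 v = 0 then lam₂ (pz2 v) else 0) • intVec v with hh
    have hsplit : ∀ v, lam v • intVec v = g v + h v := by
      intro v; rw [hlam, hg, hh]; simp only [add_smul]
    rw [Finset.sum_congr rfl (fun v _ => hsplit v), Finset.sum_add_distrib]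
    have keyg : ∑ v ∈ A ∪ B, g v = emb1 (pr1 x) := by
      rw [show A ∪ B = A ∪ (B \ A) from by rw [Finset.union_sdiff_self_eq_union],
        Finset.sum_union Finset.disjoint_sdiff]
      have hzero : ∑ v ∈ B \ A, g v = 0 := by
        apply Finset.sum_eq_zero
        intro v hv
        obtain ⟨b, _, rfl⟩ := Finset.mem_image.mp (Finset.mem_sdiff.mp hv).1
        by_cases hb : b = 0
        · rw [hg]; simp only [he₂, hb]
          rw [show gz (0 : Fin n → ℤ) (0 : Fin n' → ℤ) = 0 from by
            rw [← gz_pz 0]; congr]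
          rw [intVec_zero', smul_zero]
        · rw [hg]; simp only [he₂, pz2_gz, if_neg hb, zero_smul]
      rw [hzero, add_zero, hA, Finset.sum_image (fun a _ a' _ h => inj₁ h)]
      rw [hx1, map_sum]
      apply Finset.sum_congr rfl
      intro a _
      rw [hg]; simp only [he₁, pz1_gz, pz2_gz, if_pos rfl]
      rw [map_smul, intVec_gz, intVec_zero']
      rfl
    have keyh : ∑ v ∈ A ∪ B, h v = emb2 (pr2 x) := by
      rw [show A ∪ B = B ∪ (A \ B) from by
        rw [Finset.union_sdiff_self_eq_union, Finset.union_comm],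
        Finset.sum_union Finset.disjoint_sdiff]
      have hzero : ∑ v ∈ A \ B, h v = 0 := by
        apply Finset.sum_eq_zero
        intro v hv
        obtain ⟨a, _, rfl⟩ := Finset.mem_image.mp (Finset.mem_sdiff.mp hv).1
        by_cases ha : a = 0
        · rw [hh]; simp only [he₁, ha]
          rw [show gz (0 : Fin n → ℤ) (0 : Fin n' → ℤ) = 0 from by
            rw [← gz_pz 0]; congr]
          rw [intVec_zero', smul_zero]
        · rw [hh]; simp only [he₁, pz1_gz, if_neg ha, zero_smul]
      rw [hzero, add_zero, hB, Finset.sum_image (fun b _ b' _ h => inj₂ h)]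
      rw [hx2, map_sum]
      apply Finset.sum_congr rfl
      intro b _
      rw [hh]; simp only [he₂, pz1_gz, pz2_gz, if_pos rfl]
      rw [map_smul, intVec_gz, intVec_zero']
      rfl
    rw [keyg, keyh, emb_add, glue_pr]
  · rintro ⟨lam, hlam, rfl⟩
    rw [mem_prodCone, hS₁, hS₂]
    constructor
    · refine ⟨fun a => lam (e₁ a), fun a => hlam _, ?_⟩
      rw [map_sum]
      rw [show A ∪ B = A ∪ (B \ A) from by rw [Finset.union_sdiff_self_eq_union],
        Finset.sum_union Finset.disjoint_sdiff]
      have hzero : ∑ v ∈ B \ A, pr1 (lam v • intVec v) = 0 := by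
        apply Finset.sum_eq_zero
        intro v hv
        obtain ⟨b, _, rfl⟩ := Finset.mem_image.mp (Finset.mem_sdiff.mp hv).1
        rw [map_smul, ← intVec_pz1]
        simp only [he₂, pz1_gz, intVec_zero', smul_zero]
      rw [hzero, add_zero, hA, Finset.sum_image (fun a _ a' _ h => inj₁ h)]
      apply Finset.sum_congr rfl
      intro a _
      rw [map_smul, ← intVec_pz1]
      simp only [he₁, pz1_gz]
    · refine ⟨fun b => lam (e₂ b), fun b => hlam _, ?_⟩
      rw [map_sum]
      rw [show A ∪ B = B ∪ (A \ B) from by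
        rw [Finset.union_sdiff_self_eq_union, Finset.union_comm],
        Finset.sum_union Finset.disjoint_sdiff]
      have hzero : ∑ v ∈ A \ B, pr2 (lam v • intVec v) = 0 := by
        apply Finset.sum_eq_zero
        intro v hv
        obtain ⟨a, _, rfl⟩ := Finset.mem_image.mp (Finset.mem_sdiff.mp hv).1
        rw [map_smul, ← intVec_pz2]
        simp only [he₁, pz2_gz, intVec_zero', smul_zero]
      rw [hzero, add_zero, hB, Finset.sum_image (fun b _ b' _ h => inj₂ h)]
      apply Finset.sum_congr rfl
      intro b _
      rw [map_smul, ← intVec_pz2]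
      simp only [he₂, pz2_gz]

lemma isFan_prodFan {n n'} {F : Finset (Set (V n))} {F' : Finset (Set (V n'))}
    (hF : IsFan F) (hF' : IsFan F') : IsFan (prodFan F F') where
  nonempty := by
    obtain ⟨σ, hσ⟩ := hF.nonempty
    obtain ⟨σ', hσ'⟩ := hF'.nonempty
    exact ⟨prodCone σ σ', mem_prodFan.mpr ⟨σ, hσ, σ', hσ', rfl⟩⟩
  rat := by
    intro X hX
    obtain ⟨σ, hσ, σ', hσ', rfl⟩ := mem_prodFan.mp hX
    exact rat_prodCone (hF.rat σ hσ) (hF'.rat σ' hσ')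
  convex := by
    intro X hX
    obtain ⟨σ, hσ, σ', hσ', rfl⟩ := mem_prodFan.mp hX
    exact sc_prodCone (hF.convex σ hσ) (hF'.convex σ' hσ')
  faces_mem := by
    intro X hX τ hτ
    obtain ⟨σ, hσ, σ', hσ', rfl⟩ := mem_prodFan.mp hX
    obtain ⟨τ₁, τ₂, hf1, hf2, rfl⟩ :=
      face_of_prodCone (zero_mem_of_fan hF hσ) (zero_mem_of_fan hF' hσ') hτ
    exact mem_prodFan.mpr ⟨τ₁, hF.faces_mem σ hσ τ₁ hf1, τ₂, hF'.faces_mem σ' hσ' τ₂ hf2, rfl⟩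
  inter_face_left := by
    intro X hX Y hY
    obtain ⟨σ, hσ, σ', hσ', rfl⟩ := mem_prodFan.mp hX
    obtain ⟨ρ, hρ, ρ', hρ', rfl⟩ := mem_prodFan.mp hY
    rw [prodCone_inter]
    exact isFaceOf_prodCone (hF.inter_face_left σ hσ ρ hρ) (hF'.inter_face_left σ' hσ' ρ' hρ')
  inter_face_right := by
    intro X hX Y hY
    obtain ⟨σ, hσ, σ', hσ', rfl⟩ := mem_prodFan.mp hX
    obtain ⟨ρ, hρ, ρ', hρ', rfl⟩ := mem_prodFan.mp hY
    rw [prodCone_inter]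
    exact isFaceOf_prodCone (hF.inter_face_right σ hσ ρ hρ) (hF'.inter_face_right σ' hσ' ρ' hρ')

lemma pure_prodFan {n n' d d'} {F : Finset (Set (V n))} {F' : Finset (Set (V n'))}
    (hF : IsTropicalFan F d) (hF' : IsTropicalFan F' d') :
    ∀ X ∈ prodFan F F', (∀ Y ∈ prodFan F F', X ⊆ Y → X = Y) → dimC X = d + d' := by
  intro X hX hmax
  obtain ⟨σ, hσ, σ', hσ', rfl⟩ := mem_prodFan.mp hX
  have h0 := zero_mem_of_fan hF.1 hσ
  have h0' := zero_mem_of_fan hF'.1 hσ'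
  have hσmax : ∀ ρ ∈ F, σ ⊆ ρ → σ = ρ := by
    intro ρ hρ hsub
    have h := hmax (prodCone ρ σ') (mem_prodFan.mpr ⟨ρ, hρ, σ', hσ', rfl⟩)
      (prodCone_mono hsub (le_refl σ'))
    exact (prodCone_inj h0 h0' (zero_mem_of_fan hF.1 hρ) h0' h).1
  have hσ'max : ∀ ρ' ∈ F', σ' ⊆ ρ' → σ' = ρ' := by
    intro ρ' hρ' hsub
    have h := hmax (prodCone σ ρ') (mem_prodFan.mpr ⟨σ, hσ, ρ', hρ', rfl⟩)
      (prodCone_mono (le_refl σ) hsub)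
    exact (prodCone_inj h0 h0' h0 (zero_mem_of_fan hF'.1 hρ') h).2
  rw [dimC_prodCone h0 h0', hF.2.1 σ hσ hσmax, hF'.2.1 σ' hσ' hσ'max]

lemma memLat_prodCone {n n'} {τ₁ : Set (V n)} {τ₂ : Set (V n')}
    (h1 : (0:V n) ∈ τ₁) (h2 : (0:V n') ∈ τ₂) {v : Fin (n+n') → ℤ} :
    memLat (prodCone τ₁ τ₂) v ↔ memLat τ₁ (pz1 v) ∧ memLat τ₂ (pz2 v) := by
  rw [memLat, mem_span_prodCone h1 h2]
  rfl

lemma NV_prod_right {n n'} {τ₁ : Set (V n)} {τ₂ σ₂ : Set (V n')}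
    (h1 : (0:V n) ∈ τ₁) (h2 : (0:V n') ∈ τ₂) (h3 : (0:V n') ∈ σ₂) (hsub : τ₂ ⊆ σ₂)
    {v : Fin (n+n') → ℤ}
    (hv : IsNormalVector (prodCone τ₁ σ₂) (prodCone τ₁ τ₂) v) :
    IsNormalVector σ₂ τ₂ (pz2 v) ∧ memLat τ₁ (pz1 v) := by
  obtain ⟨hmem, ⟨y, hy, z, hz, hdec⟩, hgen⟩ := hv
  have hmem2 := (memLat_prodCone h1 h3).mp hmem
  constructor
  · refine ⟨hmem2.2, ?_, ?_⟩
    · refine ⟨pr2 y, hy.2, pr2 z, ((mem_span_prodCone h1 h2).mp hz).2, ?_⟩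
      rw [intVec_pz2, hdec, map_add]
    · intro w
      constructor
      · intro hw
        have hW : memLat (prodCone τ₁ σ₂) (gz 0 w) := by
          rw [memLat_prodCone h1 h3, pz1_gz, pz2_gz]
          exact ⟨by rw [memLat, intVec_zero']; exact Submodule.zero_mem _, hw⟩
        obtain ⟨u, k, hu, he⟩ := (hgen (gz 0 w)).mp hW
        refine ⟨pz2 u, k, ((memLat_prodCone h1 h2).mp hu).2, ?_⟩
        have := congrArg pz2 he
        rwa [pz2_gz, pz2_add, pz2_smul] at this
      · rintro ⟨u, k, hu, rfl⟩
        rw [memLat, intVec_add', intVec_zsmul]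
        exact Submodule.add_mem _ (Submodule.span_mono hsub hu)
          (Submodule.smul_mem _ _ hmem2.2)
  · rw [memLat, intVec_pz1, hdec, map_add]
    exact Submodule.add_mem _ (Submodule.subset_span hy.1)
      ((mem_span_prodCone h1 h2).mp hz).1

lemma NV_prod_left {n n'} {τ₁ σ₁ : Set (V n)} {τ₂ : Set (V n')}
    (h1 : (0:V n) ∈ τ₁) (h2 : (0:V n') ∈ τ₂) (h3 : (0:V n) ∈ σ₁) (hsub : τ₁ ⊆ σ₁)
    {v : Fin (n+n') → ℤ}
    (hv : IsNormalVector (prodCone σ₁ τ₂) (prodCone τ₁ τ₂) v) :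
    IsNormalVector σ₁ τ₁ (pz1 v) ∧ memLat τ₂ (pz2 v) := by
  obtain ⟨hmem, ⟨y, hy, z, hz, hdec⟩, hgen⟩ := hv
  have hmem2 := (memLat_prodCone h3 h2).mp hmem
  constructor
  · refine ⟨hmem2.1, ?_, ?_⟩
    · refine ⟨pr1 y, hy.1, pr1 z, ((mem_span_prodCone h1 h2).mp hz).1, ?_⟩
      rw [intVec_pz1, hdec, map_add]
    · intro w
      constructor
      · intro hw
        have hW : memLat (prodCone σ₁ τ₂) (gz w 0) := by
          rw [memLat_prodCone h3 h2, pz1_gz, pz2_gz]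
          exact ⟨hw, by rw [memLat, intVec_zero']; exact Submodule.zero_mem _⟩
        obtain ⟨u, k, hu, he⟩ := (hgen (gz w 0)).mp hW
        refine ⟨pz1 u, k, ((memLat_prodCone h1 h2).mp hu).1, ?_⟩
        have := congrArg pz1 he
        rwa [pz1_gz, pz1_add, pz1_smul] at this
      · rintro ⟨u, k, hu, rfl⟩
        rw [memLat, intVec_add', intVec_zsmul]
        exact Submodule.add_mem _ (Submodule.span_mono hsub hu)
          (Submodule.smul_mem _ _ hmem2.1)
  · rw [memLat, intVec_pz2, hdec, map_add]
    exact Submodule.add_mem _ (Submodule.subset_span hy.2)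
      ((mem_span_prodCone h1 h2).mp hz).2

lemma NV_lift_right {n n'} {τ₂ σ₂ : Set (V n')} {ρ : Set (V n)}
    (h0 : (0:V n) ∈ ρ) (h2 : (0:V n') ∈ τ₂) (h3 : (0:V n') ∈ σ₂) (hsub : τ₂ ⊆ σ₂)
    {u : Fin n' → ℤ}
    (hu : IsNormalVector σ₂ τ₂ u) :
    IsNormalVector (prodCone ρ σ₂) (prodCone ρ τ₂) (gz 0 u) := by
  obtain ⟨hmem, ⟨y, hy, z, hz, hdec⟩, hgen⟩ := hu
  have hz0 : memLat (ρ : Set (V n)) (0 : Fin n → ℤ) := by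
    rw [memLat, intVec_zero']; exact Submodule.zero_mem _
  refine ⟨?_, ?_, ?_⟩
  · rw [memLat_prodCone h0 h3, pz1_gz, pz2_gz]
    exact ⟨hz0, hmem⟩
  · refine ⟨glue 0 y, glue_mem_prodCone.mpr ⟨h0, hy⟩, glue 0 z, ?_, ?_⟩
    · rw [mem_span_prodCone h0 h2, pr1_glue, pr2_glue]
      exact ⟨Submodule.zero_mem _, hz⟩
    · rw [intVec_gz, intVec_zero', glue_add, zero_add, hdec]
  · intro w
    constructor
    · intro hw
      rw [memLat_prodCone h0 h3] at hw
      obtain ⟨u₁, k, hu₁, he⟩ := (hgen (pz2 w)).mp hw.2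
      refine ⟨gz (pz1 w) u₁, k, ?_, ?_⟩
      · rw [memLat_prodCone h0 h2, pz1_gz, pz2_gz]
        exact ⟨hw.1, hu₁⟩
      · rw [gz_smul, gz_add, smul_zero, add_zero, ← he, gz_pz]
    · rintro ⟨U, k, hU, rfl⟩
      rw [memLat_prodCone h0 h2] at hU
      rw [memLat_prodCone h0 h3, pz1_add, pz2_add, pz1_smul, pz2_smul, pz1_gz, pz2_gz,
        smul_zero, add_zero]
      refine ⟨hU.1, ?_⟩
      rw [memLat, intVec_add', intVec_zsmul]
      exact Submodule.add_mem _ (Submodule.span_mono hsub hU.2)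
        (Submodule.smul_mem _ _ hmem)

lemma NV_lift_left {n n'} {τ₁ σ₁ : Set (V n)} {ρ : Set (V n')}
    (h0 : (0:V n') ∈ ρ) (h2 : (0:V n) ∈ τ₁) (h3 : (0:V n) ∈ σ₁) (hsub : τ₁ ⊆ σ₁)
    {u : Fin n → ℤ}
    (hu : IsNormalVector σ₁ τ₁ u) :
    IsNormalVector (prodCone σ₁ ρ) (prodCone τ₁ ρ) (gz u 0) := by
  obtain ⟨hmem, ⟨y, hy, z, hz, hdec⟩, hgen⟩ := hu
  have hz0 : memLat (ρ : Set (V n')) (0 : Fin n' → ℤ) := by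
    rw [memLat, intVec_zero']; exact Submodule.zero_mem _
  refine ⟨?_, ?_, ?_⟩
  · rw [memLat_prodCone h3 h0, pz1_gz, pz2_gz]
    exact ⟨hmem, hz0⟩
  · refine ⟨glue y 0, glue_mem_prodCone.mpr ⟨hy, h0⟩, glue z 0, ?_, ?_⟩
    · rw [mem_span_prodCone h2 h0, pr1_glue, pr2_glue]
      exact ⟨hz, Submodule.zero_mem _⟩
    · rw [intVec_gz, intVec_zero', glue_add, zero_add, hdec]
  · intro w
    constructor
    · intro hw
      rw [memLat_prodCone h3 h0] at hw
      obtain ⟨u₁, k, hu₁, he⟩ := (hgen (pz1 w)).mp hw.1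
      refine ⟨gz u₁ (pz2 w), k, ?_, ?_⟩
      · rw [memLat_prodCone h2 h0, pz1_gz, pz2_gz]
        exact ⟨hu₁, hw.2⟩
      · rw [gz_smul, gz_add, smul_zero, add_zero, ← he, gz_pz]
    · rintro ⟨U, k, hU, rfl⟩
      rw [memLat_prodCone h2 h0] at hU
      rw [memLat_prodCone h3 h0, pz1_add, pz2_add, pz1_smul, pz2_smul, pz1_gz, pz2_gz,
        smul_zero, add_zero]
      refine ⟨?_, hU.2⟩
      rw [memLat, intVec_add', intVec_zsmul]
      exact Submodule.add_mem _ (Submodule.span_mono hsub hU.1)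
        (Submodule.smul_mem _ _ hmem)

lemma facets_self {n d : ℕ} {F : Finset (Set (V n))} (hF : IsTropicalFan F d)
    {τ : Set (V n)} (hτ : τ ∈ F) (hd : dimC τ = d) : facets F d τ = {τ} := by
  ext σ
  rw [facets, Finset.mem_filter, Finset.mem_singleton]
  constructor
  · rintro ⟨hσF, hσd, hsub⟩
    have hface : IsFaceOf (σ ∩ τ) σ := hF.1.inter_face_left σ hσF τ hτ
    rw [Set.inter_eq_self_of_subset_right hsub] at hface
    exact (face_eq_of_dim hface (by rw [hσd, hd])).symm
  · rintro rfl
    exact ⟨hτ, hd, subset_rfl⟩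

lemma facets_prodFan {n n' d d' : ℕ} {F : Finset (Set (V n))} {F' : Finset (Set (V n'))}
    (hF : IsTropicalFan F d) (hF' : IsTropicalFan F' d')
    {τ₁ : Set (V n)} {τ₂ : Set (V n')} (hτ₁ : τ₁ ∈ F) (hτ₂ : τ₂ ∈ F') :
    facets (prodFan F F') (d + d') (prodCone τ₁ τ₂) =
      ((facets F d τ₁) ×ˢ (facets F' d' τ₂)).image fun p => prodCone p.1 p.2 := by
  have h01 := zero_mem_of_fan hF.1 hτ₁
  have h02 := zero_mem_of_fan hF'.1 hτ₂
  ext X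
  rw [facets, Finset.mem_filter, Finset.mem_image]
  constructor
  · rintro ⟨hXF, hXd, hsub⟩
    obtain ⟨σ₁, hσ₁, σ₂, hσ₂, rfl⟩ := mem_prodFan.mp hXF
    have g01 := zero_mem_of_fan hF.1 hσ₁
    have g02 := zero_mem_of_fan hF'.1 hσ₂
    have hd1 : dimC σ₁ ≤ d := dimC_le_of_tropical hF hσ₁
    have hd2 : dimC σ₂ ≤ d' := dimC_le_of_tropical hF' hσ₂
    rw [dimC_prodCone g01 g02] at hXd
    have hsplit := (prodCone_subset_iff h01 h02).mp hsub
    exact ⟨(σ₁, σ₂), Finset.mem_product.mpr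
      ⟨Finset.mem_filter.mpr ⟨hσ₁, by change dimC σ₁ = d; omega, hsplit.1⟩,
       Finset.mem_filter.mpr ⟨hσ₂, by change dimC σ₂ = d'; omega, hsplit.2⟩⟩, rfl⟩
  · rintro ⟨⟨σ₁, σ₂⟩, hp, rfl⟩
    obtain ⟨hp1, hp2⟩ := Finset.mem_product.mp hp
    rw [facets, Finset.mem_filter] at hp1 hp2
    refine ⟨mem_prodFan.mpr ⟨σ₁, hp1.1, σ₂, hp2.1, rfl⟩, ?_, ?_⟩
    · rw [dimC_prodCone (zero_mem_of_fan hF.1 hp1.1) (zero_mem_of_fan hF'.1 hp2.1),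
        hp1.2.1, hp2.2.1]
    · exact prodCone_mono hp1.2.2 hp2.2.2

lemma facets_subset {n d : ℕ} {F : Finset (Set (V n))} {τ σ : Set (V n)}
    (h : σ ∈ facets F d τ) : σ ∈ F ∧ dimC σ = d ∧ τ ⊆ σ := by
  rw [facets, Finset.mem_filter] at h; exact ⟨h.1, h.2.1, h.2.2⟩

lemma pz1_sum {n n' : ℕ} {α : Type*} (s : Finset α) (f : α → Fin (n+n') → ℤ) :
    pz1 (∑ a ∈ s, f a) = ∑ a ∈ s, pz1 (f a) := by
  funext i; simp [pz1, Finset.sum_apply]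
lemma pz2_sum {n n' : ℕ} {α : Type*} (s : Finset α) (f : α → Fin (n+n') → ℤ) :
    pz2 (∑ a ∈ s, f a) = ∑ a ∈ s, pz2 (f a) := by
  funext i; simp [pz2, Finset.sum_apply]
lemma memLat_sum {n : ℕ} {α : Type*} {τ : Set (V n)} {s : Finset α} {f : α → Fin n → ℤ}
    (h : ∀ a ∈ s, memLat τ (f a)) : memLat τ (∑ a ∈ s, f a) := by
  rw [memLat, intVec_sum]
  exact Submodule.sum_mem _ fun a ha => h a ha

lemma prodFan_injOn_right {n n' : ℕ} {τ₁ : Set (V n)} (h01 : (0:V n) ∈ τ₁)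
    {s : Finset (Set (V n'))} (h0 : ∀ σ ∈ s, (0:V n') ∈ σ) :
    ∀ a ∈ s, ∀ b ∈ s, prodCone τ₁ a = prodCone τ₁ b → a = b :=
  fun a ha b hb h => (prodCone_inj h01 (h0 a ha) h01 (h0 b hb) h).2
lemma prodFan_injOn_left {n n' : ℕ} {τ₂ : Set (V n')} (h02 : (0:V n') ∈ τ₂)
    {s : Finset (Set (V n))} (h0 : ∀ σ ∈ s, (0:V n) ∈ σ) :
    ∀ a ∈ s, ∀ b ∈ s, prodCone a τ₂ = prodCone b τ₂ → a = b :=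
  fun a ha b hb h => (prodCone_inj (h0 a ha) h02 (h0 b hb) h02 h).1

lemma sum_facets_right {n n' d d' : ℕ} {F : Finset (Set (V n))} {F' : Finset (Set (V n'))}
    (hF : IsTropicalFan F d) (hF' : IsTropicalFan F' d')
    {τ₁ : Set (V n)} {τ₂ : Set (V n')} (hτ₁ : τ₁ ∈ F) (hτ₂ : τ₂ ∈ F')
    (hd1 : dimC τ₁ = d) {β : Type*} [AddCommMonoid β]
    (f : Set (V (n+n')) → β) :
    ∑ X ∈ facets (prodFan F F') (d + d') (prodCone τ₁ τ₂), f X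
      = ∑ σ₂ ∈ facets F' d' τ₂, f (prodCone τ₁ σ₂) := by
  rw [facets_prodFan hF hF' hτ₁ hτ₂, facets_self hF hτ₁ hd1]
  rw [Finset.sum_image ?_]
  · rw [Finset.sum_product, Finset.sum_singleton]
  · rintro ⟨a, b⟩ ha ⟨c, e⟩ hc h
    obtain ⟨ha1, ha2⟩ := Finset.mem_product.mp ha
    obtain ⟨hc1, hc2⟩ := Finset.mem_product.mp hc
    rw [Finset.mem_singleton] at ha1 hc1
    subst ha1; subst hc1
    have h0b := zero_mem_of_fan hF'.1 (facets_subset ha2).1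
    have h0e := zero_mem_of_fan hF'.1 (facets_subset hc2).1
    have h01 := zero_mem_of_fan hF.1 hτ₁
    have := (prodCone_inj h01 h0b h01 h0e h).2
    exact Prod.ext rfl this

lemma sum_facets_left {n n' d d' : ℕ} {F : Finset (Set (V n))} {F' : Finset (Set (V n'))}
    (hF : IsTropicalFan F d) (hF' : IsTropicalFan F' d')
    {τ₁ : Set (V n)} {τ₂ : Set (V n')} (hτ₁ : τ₁ ∈ F) (hτ₂ : τ₂ ∈ F')
    (hd2 : dimC τ₂ = d') {β : Type*} [AddCommMonoid β]
    (f : Set (V (n+n')) → β) :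
    ∑ X ∈ facets (prodFan F F') (d + d') (prodCone τ₁ τ₂), f X
      = ∑ σ₁ ∈ facets F d τ₁, f (prodCone σ₁ τ₂) := by
  rw [facets_prodFan hF hF' hτ₁ hτ₂, facets_self hF' hτ₂ hd2]
  rw [Finset.sum_image ?_]
  · rw [Finset.sum_product, Finset.sum_comm, Finset.sum_singleton]
  · rintro ⟨a, b⟩ ha ⟨c, e⟩ hc h
    obtain ⟨ha1, ha2⟩ := Finset.mem_product.mp ha
    obtain ⟨hc1, hc2⟩ := Finset.mem_product.mp hc
    rw [Finset.mem_singleton] at ha2 hc2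
    subst ha2; subst hc2
    have h0b := zero_mem_of_fan hF.1 (facets_subset ha1).1
    have h0e := zero_mem_of_fan hF.1 (facets_subset hc1).1
    have h02 := zero_mem_of_fan hF'.1 hτ₂
    have := (prodCone_inj h0b h02 h0e h02 h).1
    exact Prod.ext this rfl

lemma mem_facets_right {n n' d d' : ℕ} {F : Finset (Set (V n))} {F' : Finset (Set (V n'))}
    (hF : IsTropicalFan F d) (hF' : IsTropicalFan F' d')
    {τ₁ : Set (V n)} {τ₂ σ₂ : Set (V n')} (hτ₁ : τ₁ ∈ F) (hd1 : dimC τ₁ = d)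
    (hσ₂ : σ₂ ∈ facets F' d' τ₂) :
    prodCone τ₁ σ₂ ∈ facets (prodFan F F') (d + d') (prodCone τ₁ τ₂) := by
  obtain ⟨hσF, hσd, hσsub⟩ := facets_subset hσ₂
  refine Finset.mem_filter.mpr ⟨mem_prodFan.mpr ⟨τ₁, hτ₁, σ₂, hσF, rfl⟩, ?_, ?_⟩
  · rw [dimC_prodCone (zero_mem_of_fan hF.1 hτ₁) (zero_mem_of_fan hF'.1 hσF), hd1, hσd]
  · exact prodCone_mono subset_rfl hσsub

lemma mem_facets_left {n n' d d' : ℕ} {F : Finset (Set (V n))} {F' : Finset (Set (V n'))}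
    (hF : IsTropicalFan F d) (hF' : IsTropicalFan F' d')
    {τ₁ σ₁ : Set (V n)} {τ₂ : Set (V n')} (hτ₂ : τ₂ ∈ F') (hd2 : dimC τ₂ = d')
    (hσ₁ : σ₁ ∈ facets F d τ₁) :
    prodCone σ₁ τ₂ ∈ facets (prodFan F F') (d + d') (prodCone τ₁ τ₂) := by
  obtain ⟨hσF, hσd, hσsub⟩ := facets_subset hσ₁
  refine Finset.mem_filter.mpr ⟨mem_prodFan.mpr ⟨σ₁, hσF, τ₂, hτ₂, rfl⟩, ?_, ?_⟩
  · rw [dimC_prodCone (zero_mem_of_fan hF.1 hσF) (zero_mem_of_fan hF'.1 hτ₂), hd2, hσd]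
  · exact prodCone_mono hσsub subset_rfl

lemma balancing_prodFan {n n' d d' : ℕ} {F : Finset (Set (V n))} {F' : Finset (Set (V n'))}
    (hF : IsTropicalFan F d) (hF' : IsTropicalFan F' d') :
    ∀ τ ∈ prodFan F F', dimC τ = (d + d') - 1 →
      ∀ v : Set (V (n+n')) → Fin (n+n') → ℤ,
        (∀ σ ∈ facets (prodFan F F') (d+d') τ, IsNormalVector σ τ (v σ)) →
        memLat τ (∑ σ ∈ facets (prodFan F F') (d+d') τ, v σ) := by
  intro τ hτ hdim v hv
  obtain ⟨τ₁, hτ₁, τ₂, hτ₂, rfl⟩ := mem_prodFan.mp hτ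
  have h01 := zero_mem_of_fan hF.1 hτ₁
  have h02 := zero_mem_of_fan hF'.1 hτ₂
  rw [dimC_prodCone h01 h02] at hdim
  have hle1 : dimC τ₁ ≤ d := dimC_le_of_tropical hF hτ₁
  have hle2 : dimC τ₂ ≤ d' := dimC_le_of_tropical hF' hτ₂
  rcases (by omega : dimC τ₁ = d ∨ dimC τ₂ = d') with hd1 | hd2
  · -- τ₁ has full dimension, τ₂ has codimension one
    rw [sum_facets_right hF hF' hτ₁ hτ₂ hd1]
    have hNV : ∀ σ₂ ∈ facets F' d' τ₂,
        IsNormalVector σ₂ τ₂ (pz2 (v (prodCone τ₁ σ₂))) ∧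
          memLat τ₁ (pz1 (v (prodCone τ₁ σ₂))) := by
      intro σ₂ hσ₂
      obtain ⟨hσF, _, hσsub⟩ := facets_subset hσ₂
      exact NV_prod_right h01 h02 (zero_mem_of_fan hF'.1 hσF) hσsub
        (hv _ (mem_facets_right hF hF' hτ₁ hd1 hσ₂))
    rw [memLat_prodCone h01 h02, pz1_sum, pz2_sum]
    constructor
    · exact memLat_sum fun σ₂ hσ₂ => (hNV σ₂ hσ₂).2
    · exact hF'.2.2 τ₂ hτ₂ (by omega) (fun σ₂ => pz2 (v (prodCone τ₁ σ₂)))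
        (fun σ₂ hσ₂ => (hNV σ₂ hσ₂).1)
  · -- τ₂ has full dimension, τ₁ has codimension one
    rw [sum_facets_left hF hF' hτ₁ hτ₂ hd2]
    have hNV : ∀ σ₁ ∈ facets F d τ₁,
        IsNormalVector σ₁ τ₁ (pz1 (v (prodCone σ₁ τ₂))) ∧
          memLat τ₂ (pz2 (v (prodCone σ₁ τ₂))) := by
      intro σ₁ hσ₁
      obtain ⟨hσF, _, hσsub⟩ := facets_subset hσ₁
      exact NV_prod_left h01 h02 (zero_mem_of_fan hF.1 hσF) hσsub
        (hv _ (mem_facets_left hF hF' hτ₂ hd2 hσ₁))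
    rw [memLat_prodCone h01 h02, pz1_sum, pz2_sum]
    constructor
    · exact hF.2.2 τ₁ hτ₁ (by omega) (fun σ₁ => pz1 (v (prodCone σ₁ τ₂)))
        (fun σ₁ hσ₁ => (hNV σ₁ hσ₁).1)
    · exact memLat_sum fun σ₁ hσ₁ => (hNV σ₁ hσ₁).2

def projCone1 {n n' : ℕ} (X : Set (V (n+n'))) : Set (V n) := pr1 '' X
def projCone2 {n n' : ℕ} (X : Set (V (n+n'))) : Set (V n') := pr2 '' X

lemma projCone1_prod {n n'} {σ : Set (V n)} {σ' : Set (V n')} (h0' : (0:V n') ∈ σ') :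
    projCone1 (prodCone σ σ') = σ := by
  apply Set.Subset.antisymm
  · rintro x ⟨z, hz, rfl⟩; exact hz.1
  · intro x hx
    exact ⟨glue x 0, glue_mem_prodCone.mpr ⟨hx, h0'⟩, by rw [pr1_glue]⟩
lemma projCone2_prod {n n'} {σ : Set (V n)} {σ' : Set (V n')} (h0 : (0:V n) ∈ σ) :
    projCone2 (prodCone σ σ') = σ' := by
  apply Set.Subset.antisymm
  · rintro y ⟨z, hz, rfl⟩; exact hz.2
  · intro y hy
    exact ⟨glue 0 y, glue_mem_prodCone.mpr ⟨h0, hy⟩, by rw [pr2_glue]⟩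

section Irr
variable {n n' d d' : ℕ} {F : Finset (Set (V n))} {F' : Finset (Set (V n'))}

lemma step_left (hF : IsTropicalFan F d) (hF' : IsTropicalFan F' d')
    {η : Set (V n)} {η' : Set (V n')} (hη : η ∈ F) (hη' : η' ∈ F')
    (hirr : IrreducibleAt F d η)
    (w : Set (V (n+n')) → ℤ)
    (hw : ∀ τ ∈ prodFan F F', dimC τ = (d + d') - 1 → prodCone η η' ⊆ τ →
      ∀ u : Set (V (n+n')) → Fin (n+n') → ℤ,
        (∀ σ ∈ facets (prodFan F F') (d+d') τ, IsNormalVector σ τ (u σ)) →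
        memLat τ (∑ σ ∈ facets (prodFan F F') (d+d') τ, w σ • u σ))
    {σ₁ ρ₁ : Set (V n)} {σ₂ : Set (V n')}
    (hσ₂ : σ₂ ∈ facets F' d' η') (hσ₁ : σ₁ ∈ facets F d η) (hρ₁ : ρ₁ ∈ facets F d η) :
    w (prodCone σ₁ σ₂) = w (prodCone ρ₁ σ₂) := by
  obtain ⟨hσ₂F, hσ₂d, hσ₂sub⟩ := facets_subset hσ₂
  have h0σ₂ := zero_mem_of_fan hF'.1 hσ₂F
  by_cases hd : d = 0
  · -- dimension-zero case: there is only one possible facet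
    have e1 : σ₁ = {0} := eq_zero_cone (zero_mem_of_fan hF.1 (facets_subset hσ₁).1)
      (by rw [(facets_subset hσ₁).2.1, hd])
    have e2 : ρ₁ = {0} := eq_zero_cone (zero_mem_of_fan hF.1 (facets_subset hρ₁).1)
      (by rw [(facets_subset hρ₁).2.1, hd])
    rw [e1, e2]
  · apply hirr (fun σ => w (prodCone σ σ₂)) ?_ σ₁ hσ₁ ρ₁ hρ₁
    intro τ hτF hτd hητ u hu
    have h0τ := zero_mem_of_fan hF.1 hτF
    have key := hw (prodCone τ σ₂) (mem_prodFan.mpr ⟨τ, hτF, σ₂, hσ₂F, rfl⟩)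
      (by rw [dimC_prodCone h0τ h0σ₂, hτd, hσ₂d]; omega)
      (prodCone_mono hητ hσ₂sub)
      (fun X => gz (u (projCone1 X)) 0) ?_
    · rw [sum_facets_left hF hF' hτF hσ₂F hσ₂d] at key
      rw [memLat_prodCone h0τ h0σ₂] at key
      have := key.1
      rw [pz1_sum] at this
      have heq : ∀ σ ∈ facets F d τ,
          pz1 (w (prodCone σ σ₂) • gz (u (projCone1 (prodCone σ σ₂))) (0 : Fin n' → ℤ))
            = w (prodCone σ σ₂) • u σ := by
        intro σ hσ
        rw [projCone1_prod h0σ₂, pz1_smul, pz1_gz]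
      rwa [Finset.sum_congr rfl heq] at this
    · intro S hS
      have hSmem := hS
      rw [facets_prodFan hF hF' hτF hσ₂F, facets_self hF' hσ₂F hσ₂d] at hSmem
      obtain ⟨⟨a, b⟩, hab, rfl⟩ := Finset.mem_image.mp hSmem
      obtain ⟨ha, hb⟩ := Finset.mem_product.mp hab
      rw [Finset.mem_singleton] at hb
      obtain ⟨haF, had, hasub⟩ := facets_subset ha
      show IsNormalVector (prodCone a b) (prodCone τ σ₂) (gz (u (projCone1 (prodCone a b))) 0)
      have hb' : b = σ₂ := hb
      rw [hb', projCone1_prod h0σ₂]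
      exact NV_lift_left h0σ₂ h0τ (zero_mem_of_fan hF.1 haF) hasub (hu a ha)

lemma step_right (hF : IsTropicalFan F d) (hF' : IsTropicalFan F' d')
    {η : Set (V n)} {η' : Set (V n')} (hη : η ∈ F) (hη' : η' ∈ F')
    (hirr' : IrreducibleAt F' d' η')
    (w : Set (V (n+n')) → ℤ)
    (hw : ∀ τ ∈ prodFan F F', dimC τ = (d + d') - 1 → prodCone η η' ⊆ τ →
      ∀ u : Set (V (n+n')) → Fin (n+n') → ℤ,
        (∀ σ ∈ facets (prodFan F F') (d+d') τ, IsNormalVector σ τ (u σ)) →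
        memLat τ (∑ σ ∈ facets (prodFan F F') (d+d') τ, w σ • u σ))
    {σ₁ : Set (V n)} {σ₂ ρ₂ : Set (V n')}
    (hσ₁ : σ₁ ∈ facets F d η) (hσ₂ : σ₂ ∈ facets F' d' η') (hρ₂ : ρ₂ ∈ facets F' d' η') :
    w (prodCone σ₁ σ₂) = w (prodCone σ₁ ρ₂) := by
  obtain ⟨hσ₁F, hσ₁d, hσ₁sub⟩ := facets_subset hσ₁
  have h0σ₁ := zero_mem_of_fan hF.1 hσ₁F
  by_cases hd : d' = 0
  · have e1 : σ₂ = {0} := eq_zero_cone (zero_mem_of_fan hF'.1 (facets_subset hσ₂).1)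
      (by rw [(facets_subset hσ₂).2.1, hd])
    have e2 : ρ₂ = {0} := eq_zero_cone (zero_mem_of_fan hF'.1 (facets_subset hρ₂).1)
      (by rw [(facets_subset hρ₂).2.1, hd])
    rw [e1, e2]
  · apply hirr' (fun σ' => w (prodCone σ₁ σ')) ?_ σ₂ hσ₂ ρ₂ hρ₂
    intro τ hτF hτd hητ u hu
    have h0τ := zero_mem_of_fan hF'.1 hτF
    have key := hw (prodCone σ₁ τ) (mem_prodFan.mpr ⟨σ₁, hσ₁F, τ, hτF, rfl⟩)
      (by rw [dimC_prodCone h0σ₁ h0τ, hτd, hσ₁d]; omega)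
      (prodCone_mono hσ₁sub hητ)
      (fun X => gz 0 (u (projCone2 X))) ?_
    · rw [sum_facets_right hF hF' hσ₁F hτF hσ₁d] at key
      rw [memLat_prodCone h0σ₁ h0τ] at key
      have := key.2
      rw [pz2_sum] at this
      have heq : ∀ σ' ∈ facets F' d' τ,
          pz2 (w (prodCone σ₁ σ') • gz (0 : Fin n → ℤ) (u (projCone2 (prodCone σ₁ σ'))))
            = w (prodCone σ₁ σ') • u σ' := by
        intro σ' hσ'
        rw [projCone2_prod h0σ₁, pz2_smul, pz2_gz]
      rwa [Finset.sum_congr rfl heq] at this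
    · intro S hS
      have hSmem := hS
      rw [facets_prodFan hF hF' hσ₁F hτF, facets_self hF hσ₁F hσ₁d] at hSmem
      obtain ⟨⟨a, b⟩, hab, rfl⟩ := Finset.mem_image.mp hSmem
      obtain ⟨ha, hb⟩ := Finset.mem_product.mp hab
      rw [Finset.mem_singleton] at ha
      obtain ⟨hbF, hbd, hbsub⟩ := facets_subset hb
      show IsNormalVector (prodCone a b) (prodCone σ₁ τ) (gz 0 (u (projCone2 (prodCone a b))))
      have ha' : a = σ₁ := ha
      rw [ha', projCone2_prod h0σ₁]
      exact NV_lift_right h0σ₁ h0τ (zero_mem_of_fan hF'.1 hbF) hbsub (hu b hb)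

end Irr

/-- The product of two locally irreducible tropical fans (of pure
dimensions `d` and `d'`) is a tropical fan of pure dimension `d + d'` in `ℝ^{n+n'}`
and is locally irreducible, i.e. irreducible at every cone `σ × σ'`. -/
theorem prod_locally_irreducible {n n' d d' : ℕ}
    (F : Finset (Set (V n))) (F' : Finset (Set (V n')))
    (hF : IsTropicalFan F d) (hF' : IsTropicalFan F' d')
    (hirr : ∀ η ∈ F, IrreducibleAt F d η)
    (hirr' : ∀ η' ∈ F', IrreducibleAt F' d' η') :
    IsTropicalFan (prodFan F F') (d + d') ∧
    ∀ η ∈ F, ∀ η' ∈ F',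
      IrreducibleAt (prodFan F F') (d + d') (prodCone η η') := by
  constructor
  · exact ⟨isFan_prodFan hF.1 hF'.1, pure_prodFan hF hF', balancing_prodFan hF hF'⟩
  · intro η hη η' hη'
    intro w hw X hX X' hX'
    rw [facets_prodFan hF hF' hη hη'] at hX hX'
    obtain ⟨⟨σ₁, σ₂⟩, hp, rfl⟩ := Finset.mem_image.mp hX
    obtain ⟨⟨ρ₁, ρ₂⟩, hq, rfl⟩ := Finset.mem_image.mp hX'
    obtain ⟨h1, h2⟩ := Finset.mem_product.mp hp
    obtain ⟨g1, g2⟩ := Finset.mem_product.mp hq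
    show w (prodCone σ₁ σ₂) = w (prodCone ρ₁ ρ₂)
    calc w (prodCone σ₁ σ₂) = w (prodCone ρ₁ σ₂) :=
          step_left hF hF' hη hη' (hirr η hη) w hw h2 h1 g1
    _ = w (prodCone ρ₁ ρ₂) := step_right hF hF' hη hη' (hirr' η' hη') w hw g1 h2 g2

end
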